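/- Let B ⊆ ℝ^d be a measurable set with 0 < |B| < ∞ (Lebesgue measure), and let B_1, …, B_m (m ≥ 2) be measurable subsets of B such that B = B_1 ∪ ⋯ ∪ B_m, |B_ℓ| > 0 for all ℓ, and |B_{ℓ_1} ∩ B_{ℓ_2}| = 0 for ℓ_1 ≠ ℓ_2. Set γ_ℓ = χ_{B_ℓ}/√|B_ℓ|, b_ℓ = |B_ℓ|/|B|, and for 1 ≤ ℓ_1 < ℓ_2 ≤ m define ψ^{(ℓ_1,ℓ_2)} = √(b_{ℓ_2}) γ_{ℓ_1} − √(b_{ℓ_1}) γ_{ℓ_2} ∈ L²(ℝ^d). Then for every f in the linear span W_B of {ψ^{(ℓ_1,ℓ_2)} : 1 ≤ ℓ_1 < ℓ_2 ≤ m} one has f = Σ_{1≤ℓ_1<ℓ_2≤m} ⟨f, ψ^{(ℓ_1,ℓ_2)}⟩ ψ^{(ℓ_1,ℓ_2)}; that is, Ψ_B = {ψ^{(ℓ_1,ℓ_2)}} is a tight frame (with frame constant 1) for W_B. -/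

import Mathlib

open MeasureTheory

/-- `γ_C = χ_C / √|C|`. -/
noncomputable def gammaFn {d : ℕ} (C : Set (Fin d → ℝ)) : (Fin d → ℝ) → ℝ :=
  C.indicator fun _ => (Real.sqrt (volume C).toReal)⁻¹

/-- `ψ^{(C,C')} = √(|C'|/|B|) γ_C − √(|C|/|B|) γ_{C'}` for sub-blocks `C, C'` of `B`. -/
noncomputable def psiFn {d : ℕ} (B C C' : Set (Fin d → ℝ)) : (Fin d → ℝ) → ℝ :=
  fun x =>
    Real.sqrt ((volume C').toReal / (volume B).toReal) * gammaFn C x -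
      Real.sqrt ((volume C).toReal / (volume B).toReal) * gammaFn C' x

lemma sum_pairs_symm {m : ℕ} (F : Fin m × Fin m → ℝ)
    (hsym : ∀ c e : Fin m, F (e, c) = F (c, e)) (hdiag : ∀ c : Fin m, F (c, c) = 0) :
    ∑ p ∈ Finset.univ.filter (fun p : Fin m × Fin m => p.1 < p.2), F p
      = (∑ c : Fin m, ∑ e : Fin m, F (c, e)) / 2 := by
  have key : ∀ p : Fin m × Fin m,
      F p = (if p.1 < p.2 then F p else 0) + (if p.2 < p.1 then F p else 0)
        + (if p.1 = p.2 then F p else 0) := by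
    intro p
    rcases lt_trichotomy p.1 p.2 with h | h | h
    · simp [h, asymm h, ne_of_lt h]
    · simp [h, hdiag]
    · simp [h, asymm h, (ne_of_lt h).symm]
  have hfull : ∑ c : Fin m, ∑ e : Fin m, F (c, e) = ∑ p : Fin m × Fin m, F p := by
    rw [← Fintype.sum_prod_type]
  have h3 : ∑ p : Fin m × Fin m, (if p.1 = p.2 then F p else 0) = 0 := by
    apply Finset.sum_eq_zero
    intro p _
    split_ifs with h
    · rw [show p = (p.1, p.2) from rfl, h, hdiag]
    · rfl
  have hswap : ∑ p : Fin m × Fin m, (if p.2 < p.1 then F p else 0)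
      = ∑ p : Fin m × Fin m, (if p.1 < p.2 then F p else 0) := by
    apply Finset.sum_nbij' Prod.swap Prod.swap <;> intro p _ <;>
      simp [Prod.swap, hsym p.1 p.2]
  have hsumkey : ∑ p : Fin m × Fin m, F p
      = 2 * ∑ p : Fin m × Fin m, (if p.1 < p.2 then F p else 0) := by
    calc ∑ p : Fin m × Fin m, F p
        = ∑ p : Fin m × Fin m, ((if p.1 < p.2 then F p else 0)
            + (if p.2 < p.1 then F p else 0) + (if p.1 = p.2 then F p else 0)) :=
          Finset.sum_congr rfl (fun p _ => key p)
      _ = _ := by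
          rw [Finset.sum_add_distrib, Finset.sum_add_distrib, h3, hswap]; ring
  rw [hfull, hsumkey, ← Finset.sum_filter]
  ring

lemma double_sum_eval {m : ℕ} (s G : Fin m → ℝ) (hs : ∑ ℓ, s ℓ * s ℓ = 1) (a b : Fin m)
    (F : Fin m × Fin m → ℝ)
    (hF : ∀ p : Fin m × Fin m, F p =
      (s b * s p.2 * (if a = p.1 then 1 else 0) - s b * s p.1 * (if a = p.2 then 1 else 0)
        - s a * s p.2 * (if b = p.1 then 1 else 0) + s a * s p.1 * (if b = p.2 then 1 else 0))
        * (s p.2 * G p.1 - s p.1 * G p.2)) :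
    ∑ c : Fin m, ∑ e : Fin m, F (c, e) = 2 * (s b * G a - s a * G b) := by
  set P := ∑ ℓ, s ℓ * G ℓ with hP
  have collapse1 : ∀ (t : Fin m) (X : Fin m → Fin m → ℝ),
      (∑ c : Fin m, ∑ e : Fin m, (if t = c then X c e else 0)) = ∑ e : Fin m, X t e := by
    intro t X
    rw [Finset.sum_comm]
    simp [Finset.sum_ite_eq]
  have collapse2 : ∀ (t : Fin m) (X : Fin m → Fin m → ℝ),
      (∑ c : Fin m, ∑ e : Fin m, (if t = e then X c e else 0)) = ∑ c : Fin m, X c t := by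
    intro t X
    simp [Finset.sum_ite_eq]
  have hone : ∀ x y : Fin m,
      (∑ e : Fin m, (s x * s e) * (s e * G y - s y * G e)) = s x * G y - s x * s y * P := by
    intro x y
    have h : ∀ e : Fin m, (s x * s e) * (s e * G y - s y * G e)
        = (s x * G y) * (s e * s e) - (s x * s y) * (s e * G e) := fun e => by ring
    rw [Finset.sum_congr rfl fun e _ => h e, Finset.sum_sub_distrib,
      ← Finset.mul_sum, ← Finset.mul_sum, hs, ← hP]
    ring
  have hone' : ∀ x y : Fin m,
      (∑ e : Fin m, (s x * s e) * (s y * G e - s e * G y)) = s x * s y * P - s x * G y := by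
    intro x y
    have h : ∀ e : Fin m, (s x * s e) * (s y * G e - s e * G y)
        = -((s x * s e) * (s e * G y - s y * G e)) := fun e => by ring
    rw [Finset.sum_congr rfl fun e _ => h e, Finset.sum_neg_distrib, hone]
    ring
  calc ∑ c : Fin m, ∑ e : Fin m, F (c, e)
      = ∑ c : Fin m, ∑ e : Fin m,
          ((if a = c then (s b * s e) * (s e * G c - s c * G e) else 0)
            - (if a = e then (s b * s c) * (s e * G c - s c * G e) else 0)
            - (if b = c then (s a * s e) * (s e * G c - s c * G e) else 0)
            + (if b = e then (s a * s c) * (s e * G c - s c * G e) else 0)) := by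
        refine Finset.sum_congr rfl fun c _ => Finset.sum_congr rfl fun e _ => ?_
        rw [hF]
        split_ifs <;> ring
    _ = (∑ c : Fin m, ∑ e : Fin m, (if a = c then (s b * s e) * (s e * G c - s c * G e) else 0))
          - (∑ c : Fin m, ∑ e : Fin m, (if a = e then (s b * s c) * (s e * G c - s c * G e) else 0))
          - (∑ c : Fin m, ∑ e : Fin m, (if b = c then (s a * s e) * (s e * G c - s c * G e) else 0))
          + (∑ c : Fin m, ∑ e : Fin m, (if b = e then (s a * s c) * (s e * G c - s c * G e) else 0)) := by
        simp only [Finset.sum_add_distrib, Finset.sum_sub_distrib]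
    _ = 2 * (s b * G a - s a * G b) := by
        rw [collapse1 a, collapse2 a, collapse1 b, collapse2 b]
        rw [hone b a, hone' b a, hone a b, hone' a b]
        ring

/-- the generators `ψ^{(ℓ₁,ℓ₂)}`, `1 ≤ ℓ₁ < ℓ₂ ≤ m`, form a tight frame
(with frame constant 1) for their linear span `W_B`:
every `f ∈ W_B` satisfies `f = ∑ ⟨f, ψ^{(ℓ₁,ℓ₂)}⟩ ψ^{(ℓ₁,ℓ₂)}` (as elements of `L²(ℝ^d)`). -/
theorem tight_frame_for_span_of_block_generators
    {d m : ℕ} (hm : 2 ≤ m) (B : Set (Fin d → ℝ)) (Bs : Fin m → Set (Fin d → ℝ))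
    (hBmeas : MeasurableSet B) (hmeas : ∀ ℓ, MeasurableSet (Bs ℓ))
    (hBpos : 0 < volume B) (hBfin : volume B < ⊤)
    (hsub : ∀ ℓ, Bs ℓ ⊆ B) (hcover : B = ⋃ ℓ, Bs ℓ)
    (hpos : ∀ ℓ, 0 < volume (Bs ℓ))
    (hnull : ∀ ℓ₁ ℓ₂, ℓ₁ ≠ ℓ₂ → volume (Bs ℓ₁ ∩ Bs ℓ₂) = 0)
    (f : (Fin d → ℝ) → ℝ)
    (hf : f ∈ Submodule.span ℝ
      (Set.range fun p : {p : Fin m × Fin m // p.1 < p.2} =>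
        psiFn B (Bs p.1.1) (Bs p.1.2))) :
    f =ᵐ[volume] fun x =>
      ∑ p ∈ Finset.univ.filter (fun p : Fin m × Fin m => p.1 < p.2),
        (∫ y, f y * psiFn B (Bs p.1) (Bs p.2) y) * psiFn B (Bs p.1) (Bs p.2) x := by
  classical
  set v : ℝ := (volume B).toReal with hv_def
  set a : Fin m → ℝ := fun ℓ => (volume (Bs ℓ)).toReal with ha_def
  set s : Fin m → ℝ := fun ℓ => Real.sqrt (a ℓ / v) with hs_def
  set γ : Fin m → (Fin d → ℝ) → ℝ := fun ℓ => gammaFn (Bs ℓ) with hγ_def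
  have hBfin' : volume B ≠ ⊤ := hBfin.ne
  have hvpos : 0 < v := ENNReal.toReal_pos hBpos.ne' hBfin'
  have hafin : ∀ ℓ, volume (Bs ℓ) ≠ ⊤ := fun ℓ => ((measure_mono (hsub ℓ)).trans_lt hBfin).ne
  have hapos : ∀ ℓ, 0 < a ℓ := fun ℓ => ENNReal.toReal_pos (hpos ℓ).ne' (hafin ℓ)
  have hpsi : ∀ c e : Fin m, ∀ x, psiFn B (Bs c) (Bs e) x = s e * γ c x - s c * γ e x :=
    fun c e x => rfl
  -- total mass
  have hsum : ∑ ℓ, a ℓ = v := by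
    have hd : Pairwise (Function.onFun (MeasureTheory.AEDisjoint volume) Bs) :=
      fun i j hij => hnull i j hij
    have hU := measure_iUnion₀ hd (fun i => (hmeas i).nullMeasurableSet)
    rw [← hcover, tsum_fintype] at hU
    rw [hv_def, hU, ENNReal.toReal_sum (fun i _ => hafin i)]
  have hs2 : ∑ ℓ, s ℓ * s ℓ = 1 := by
    have h : ∀ ℓ, s ℓ * s ℓ = a ℓ / v :=
      fun ℓ => Real.mul_self_sqrt (div_nonneg (hapos ℓ).le hvpos.le)
    rw [Finset.sum_congr rfl fun ℓ _ => h ℓ, ← Finset.sum_div, hsum, div_self hvpos.ne']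
  -- products of the γ's
  have hγγ : ∀ i j : Fin m, (fun y => γ i y * γ j y)
      = (Bs i ∩ Bs j).indicator
          (fun _ => (Real.sqrt (a i))⁻¹ * (Real.sqrt (a j))⁻¹) := by
    intro i j
    funext x
    simp only [hγ_def, ha_def, gammaFn, Set.indicator_apply, Set.mem_inter_iff]
    by_cases h1 : x ∈ Bs i <;> by_cases h2 : x ∈ Bs j <;> simp [h1, h2]
  have hγγint : ∀ i j : Fin m, Integrable (fun y => γ i y * γ j y) := by
    intro i j
    rw [hγγ i j, integrable_indicator_iff ((hmeas i).inter (hmeas j))]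
    exact integrableOn_const (
      ((measure_mono Set.inter_subset_left).trans_lt
        ((measure_mono (hsub i)).trans_lt hBfin)).ne)
  have hγγI : ∀ i j : Fin m, (∫ y, γ i y * γ j y) = if i = j then 1 else 0 := by
    intro i j
    rw [hγγ i j, integral_indicator_const _ ((hmeas i).inter (hmeas j))]
    by_cases h : i = j
    · subst h
      rw [Set.inter_self, if_pos rfl, smul_eq_mul]
      have h2 : (Real.sqrt (a i))⁻¹ * (Real.sqrt (a i))⁻¹ = (a i)⁻¹ := by
        rw [← mul_inv, Real.mul_self_sqrt (hapos i).le]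
      rw [show volume.real (Bs i) = a i from rfl, h2]
      exact mul_inv_cancel₀ (hapos i).ne'
    · rw [if_neg h, measureReal_def, hnull i j h]
      simp
  -- integrability against ψ's
  have hψint : ∀ g : (Fin d → ℝ) → ℝ, (∀ j, Integrable (fun y => g y * γ j y)) →
      ∀ c e : Fin m, Integrable (fun y => g y * psiFn B (Bs c) (Bs e) y) := by
    intro g hg c e
    have h : (fun y => g y * psiFn B (Bs c) (Bs e) y)
        = fun y => s e * (g y * γ c y) - s c * (g y * γ e y) := by
      funext y; rw [hpsi]; ring
    rw [h]
    exact ((hg c).const_mul (s e)).sub ((hg e).const_mul (s c))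
  suffices h : (∀ j, Integrable (fun y => f y * γ j y)) ∧
      ∀ x, f x = ∑ p ∈ Finset.univ.filter (fun p : Fin m × Fin m => p.1 < p.2),
        (∫ y, f y * psiFn B (Bs p.1) (Bs p.2) y) * psiFn B (Bs p.1) (Bs p.2) x by
    filter_upwards [] with x using h.2 x
  refine Submodule.span_induction
    (p := fun g _ => (∀ j, Integrable (fun y => g y * γ j y)) ∧
      ∀ x, g x = ∑ p ∈ Finset.univ.filter (fun p : Fin m × Fin m => p.1 < p.2),
        (∫ y, g y * psiFn B (Bs p.1) (Bs p.2) y) * psiFn B (Bs p.1) (Bs p.2) x)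
    ?_ ?_ ?_ ?_ hf
  · -- generators
    rintro g ⟨⟨⟨c, e⟩, hce⟩, rfl⟩
    constructor
    · intro j
      have h : (fun y => psiFn B (Bs c) (Bs e) y * γ j y)
          = fun y => s e * (γ c y * γ j y) - s c * (γ e y * γ j y) := by
        funext y; rw [hpsi]; ring
      rw [h]
      exact ((hγγint c j).const_mul (s e)).sub ((hγγint e j).const_mul (s c))
    · intro x
      have hT : ∀ p : Fin m × Fin m,
          (∫ y, psiFn B (Bs c) (Bs e) y * psiFn B (Bs p.1) (Bs p.2) y)
            = s e * s p.2 * (if c = p.1 then 1 else 0)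
              - s e * s p.1 * (if c = p.2 then 1 else 0)
              - s c * s p.2 * (if e = p.1 then 1 else 0)
              + s c * s p.1 * (if e = p.2 then 1 else 0) := by
        intro p
        have hfun : (fun y => psiFn B (Bs c) (Bs e) y * psiFn B (Bs p.1) (Bs p.2) y)
            = fun y => (s e * s p.2) * (γ c y * γ p.1 y) - (s e * s p.1) * (γ c y * γ p.2 y)
                - (s c * s p.2) * (γ e y * γ p.1 y) + (s c * s p.1) * (γ e y * γ p.2 y) := by
          funext y; rw [hpsi, hpsi]; ring
        have I1 := (hγγint c p.1).const_mul (s e * s p.2)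
        have I2 := (hγγint c p.2).const_mul (s e * s p.1)
        have I3 := (hγγint e p.1).const_mul (s c * s p.2)
        have I4 := (hγγint e p.2).const_mul (s c * s p.1)
        have I12 : Integrable (fun y => (s e * s p.2) * (γ c y * γ p.1 y)
            - (s e * s p.1) * (γ c y * γ p.2 y)) volume := I1.sub I2
        have I123 : Integrable (fun y => (s e * s p.2) * (γ c y * γ p.1 y)
            - (s e * s p.1) * (γ c y * γ p.2 y)
            - (s c * s p.2) * (γ e y * γ p.1 y)) volume := I12.sub I3
        rw [hfun, integral_add I123 I4, integral_sub I12 I3,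
          integral_sub I1 I2, integral_const_mul, integral_const_mul, integral_const_mul,
          integral_const_mul, hγγI c p.1, hγγI c p.2, hγγI e p.1, hγγI e p.2]
      set F : Fin m × Fin m → ℝ := fun p =>
        (∫ y, psiFn B (Bs c) (Bs e) y * psiFn B (Bs p.1) (Bs p.2) y)
          * psiFn B (Bs p.1) (Bs p.2) x with hF_def
      have hFeq : ∀ p : Fin m × Fin m, F p =
          (s e * s p.2 * (if c = p.1 then 1 else 0) - s e * s p.1 * (if c = p.2 then 1 else 0)
            - s c * s p.2 * (if e = p.1 then 1 else 0)
            + s c * s p.1 * (if e = p.2 then 1 else 0))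
            * (s p.2 * γ p.1 x - s p.1 * γ p.2 x) := by
        intro p
        rw [hF_def]
        dsimp only
        rw [hT p, hpsi]
      have hsym : ∀ i j : Fin m, F (j, i) = F (i, j) := by
        intro i j; rw [hFeq, hFeq]; ring
      have hdiag : ∀ i : Fin m, F (i, i) = 0 := fun i => by rw [hFeq]; ring
      rw [sum_pairs_symm F hsym hdiag,
        double_sum_eval s (fun ℓ => γ ℓ x) hs2 c e F hFeq]
      show psiFn B (Bs c) (Bs e) x = 2 * (s e * γ c x - s c * γ e x) / 2
      rw [hpsi]
      ring
  · -- zero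
    refine ⟨fun j => ?_, fun x => ?_⟩
    · simp only [Pi.zero_apply, zero_mul]; exact integrable_zero _ _ _
    · simp only [Pi.zero_apply, zero_mul, integral_zero, Finset.sum_const_zero]
  · -- add
    rintro g1 g2 hg1mem hg2mem ⟨h1, heq1⟩ ⟨h2, heq2⟩
    constructor
    · intro j
      have h : (fun y => (g1 + g2) y * γ j y)
          = fun y => g1 y * γ j y + g2 y * γ j y := by
        funext y; simp [add_mul]
      rw [h]
      exact (h1 j).add (h2 j)
    · intro x
      have key : ∀ p : Fin m × Fin m,
          (∫ y, (g1 + g2) y * psiFn B (Bs p.1) (Bs p.2) y)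
            = (∫ y, g1 y * psiFn B (Bs p.1) (Bs p.2) y)
              + ∫ y, g2 y * psiFn B (Bs p.1) (Bs p.2) y := by
        intro p
        rw [show (fun y => (g1 + g2) y * psiFn B (Bs p.1) (Bs p.2) y)
            = fun y => g1 y * psiFn B (Bs p.1) (Bs p.2) y
              + g2 y * psiFn B (Bs p.1) (Bs p.2) y from funext fun y => by simp [add_mul]]
        exact integral_add (hψint g1 h1 p.1 p.2) (hψint g2 h2 p.1 p.2)
      have hx : (g1 + g2) x = g1 x + g2 x := rfl
      rw [hx, heq1 x, heq2 x, ← Finset.sum_add_distrib]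
      exact Finset.sum_congr rfl fun p _ => by rw [key p]; ring
  · -- smul
    rintro r g hgmem ⟨h1, heq⟩
    constructor
    · intro j
      have h : (fun y => (r • g) y * γ j y) = fun y => r * (g y * γ j y) := by
        funext y; simp [smul_eq_mul, mul_assoc]
      rw [h]
      exact (h1 j).const_mul r
    · intro x
      have key : ∀ p : Fin m × Fin m,
          (∫ y, (r • g) y * psiFn B (Bs p.1) (Bs p.2) y)
            = r * ∫ y, g y * psiFn B (Bs p.1) (Bs p.2) y := by
        intro p
        rw [show (fun y => (r • g) y * psiFn B (Bs p.1) (Bs p.2) y)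
            = fun y => r * (g y * psiFn B (Bs p.1) (Bs p.2) y)
            from funext fun y => by simp [smul_eq_mul, mul_assoc]]
        exact integral_const_mul r _
      have hx : (r • g) x = r * g x := rfl
      rw [hx, heq x, Finset.mul_sum]
      exact Finset.sum_congr rfl fun p _ => by rw [key p]; ring
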